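/- The group of level-preserving order automorphisms of the poset P (bijections α : P → P with ℓ(α(x)) = ℓ(x) for all x and with α(x) ≤ α(y) if and only if x ≤ y) is isomorphic to the direct product S₃ × S₆, where the S₃-factor simultaneously permutes the three chains (a₂₂, a₂₁₁), (b₂₂, b₂₁₁), (c₂₂, c₂₁₁) and the S₆-factor consists of all permutations of the six bottom elements a₁₄, b₁₄, c₁₄, e₁₄, f₁₄, h₁₄. -/

import Mathlib

/-- The 14 substitution isomers of ethene (the poset `T₍₄;G₎`, `G` the Klein four
group in `S₄`). -/
inductive EthP : Type
  | a4 | a31 | a22 | b22 | c22 | a211 | b211 | c211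
  | a14 | b14 | c14 | e14 | f14 | h14
  deriving DecidableEq

open EthP in
/-- The level function: 4 for `a₄`, 3 for `a₃₁`, 2 for the `(2²)`-row, 1 for the
`(2,1²)`-row, 0 for the `(1⁴)`-row. -/
def ethLevel : EthP → ℕ
  | a4 => 4
  | a31 => 3
  | a22 | b22 | c22 => 2
  | a211 | b211 | c211 => 1
  | a14 | b14 | c14 | e14 | f14 | h14 => 0

open EthP in
/-- The covering relations of the ethene poset. -/
def ethCovers : List (EthP × EthP) :=
  [(a31, a4),
   (a22, a31), (b22, a31), (c22, a31),
   (a211, a22), (b211, b22), (c211, c22),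
   (a14, a211), (b14, a211), (c14, a211), (e14, a211), (f14, a211), (h14, a211),
   (a14, b211), (b14, b211), (c14, b211), (e14, b211), (f14, b211), (h14, b211),
   (a14, c211), (b14, c211), (c14, c211), (e14, c211), (f14, c211), (h14, c211)]

/-- The partial order of the ethene poset: the reflexive-transitive closure of the
covering relations. -/
def ethLE : EthP → EthP → Prop :=
  Relation.ReflTransGen (fun x y => (x, y) ∈ ethCovers)

/-- The group of level-preserving order automorphisms of the ethene poset. -/
def ethAut : Subgroup (Equiv.Perm EthP) where
  carrier := {α | (∀ x, ethLevel (α x) = ethLevel x) ∧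
    ∀ x y, ethLE (α x) (α y) ↔ ethLE x y}
  one_mem' := by
    constructor <;> simp
  mul_mem' := by
    rintro α β ⟨hα1, hα2⟩ ⟨hβ1, hβ2⟩
    constructor
    · intro x
      simp only [Equiv.Perm.mul_apply]
      rw [hα1, hβ1]
    · intro x y
      simp only [Equiv.Perm.mul_apply]
      rw [hα2, hβ2]
  inv_mem' := by
    rintro α ⟨hα1, hα2⟩
    constructor
    · intro x
      conv_rhs => rw [← (show α (α⁻¹ x) = x from Equiv.apply_symm_apply α x)]
      rw [hα1]
    · intro x y
      conv_rhs => rw [← (show α (α⁻¹ x) = x from Equiv.apply_symm_apply α x), ← (show α (α⁻¹ y) = y from Equiv.apply_symm_apply α y)]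
      rw [hα2]

/-- The `(2²)`-row indexed by `{a, b, c}`. -/
def eth22 : Fin 3 → EthP := ![EthP.a22, EthP.b22, EthP.c22]

/-- The `(2,1²)`-row indexed by `{a, b, c}`. -/
def eth211 : Fin 3 → EthP := ![EthP.a211, EthP.b211, EthP.c211]

/-- The `(1⁴)`-row (the six bottom elements). -/
def eth14 : Fin 6 → EthP :=
  ![EthP.a14, EthP.b14, EthP.c14, EthP.e14, EthP.f14, EthP.h14]

/-! ### Auxiliary development -/

open EthP in
instance : Fintype EthP :=
  ⟨⟨↑[a4, a31, a22, b22, c22, a211, b211, c211, a14, b14, c14, e14, f14, h14], by decide⟩,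
    fun x => by cases x <;> decide⟩

open EthP in
/-- An explicit boolean description of the order. -/
def ethRb (x y : EthP) : Bool :=
  match y with
  | a4 => true
  | a31 => decide (ethLevel x ≤ 3)
  | a22 => x == a22 || x == a211 || ethLevel x == 0
  | b22 => x == b22 || x == b211 || ethLevel x == 0
  | c22 => x == c22 || x == c211 || ethLevel x == 0
  | a211 => x == a211 || ethLevel x == 0
  | b211 => x == b211 || ethLevel x == 0
  | c211 => x == c211 || ethLevel x == 0
  | y => x == y

lemma ethRb_refl : ∀ x : EthP, ethRb x x = true := by decide

lemma ethRb_step : ∀ x y z : EthP, ethRb x y = true → (y, z) ∈ ethCovers →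
    ethRb x z = true := by decide

lemma ethRb_of_le {x y : EthP} (h : ethLE x y) : ethRb x y = true := by
  induction h with
  | refl => exact ethRb_refl x
  | tail _ hc ih => exact ethRb_step _ _ _ ih hc

lemma ethRb_destruct : ∀ x y : EthP, ethRb x y = true →
    x = y ∨ ∃ z, (x, z) ∈ ethCovers ∧ ethRb z y = true := by decide

lemma eth_cover_level : ∀ x y : EthP, (x, y) ∈ ethCovers →
    ethLevel y = ethLevel x + 1 := by decide

lemma ethLevel_le_four : ∀ x : EthP, ethLevel x ≤ 4 := by decide

lemma le_of_ethRb : ∀ x y : EthP, ethRb x y = true → ethLE x y := by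
  intro x y h
  rcases ethRb_destruct x y h with rfl | ⟨z1, hc1, h1⟩
  · exact .refl
  rcases ethRb_destruct z1 y h1 with rfl | ⟨z2, hc2, h2⟩
  · exact .single hc1
  rcases ethRb_destruct z2 y h2 with rfl | ⟨z3, hc3, h3⟩
  · exact .head hc1 (.single hc2)
  rcases ethRb_destruct z3 y h3 with rfl | ⟨z4, hc4, h4⟩
  · exact .head hc1 (.head hc2 (.single hc3))
  rcases ethRb_destruct z4 y h4 with rfl | ⟨z5, hc5, h5⟩
  · exact .head hc1 (.head hc2 (.head hc3 (.single hc4)))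
  · have l1 := eth_cover_level _ _ hc1
    have l2 := eth_cover_level _ _ hc2
    have l3 := eth_cover_level _ _ hc3
    have l4 := eth_cover_level _ _ hc4
    have l5 := eth_cover_level _ _ hc5
    have := ethLevel_le_four z5
    omega

lemma ethLE_iff (x y : EthP) : ethLE x y ↔ ethRb x y = true :=
  ⟨ethRb_of_le, le_of_ethRb x y⟩

open EthP in
/-- The action of `(π, ρ)` on the poset. -/
def ethMap (π : Equiv.Perm (Fin 3)) (ρ : Equiv.Perm (Fin 6)) : EthP → EthP
  | a4 => a4
  | a31 => a31
  | a22 => eth22 (π 0)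
  | b22 => eth22 (π 1)
  | c22 => eth22 (π 2)
  | a211 => eth211 (π 0)
  | b211 => eth211 (π 1)
  | c211 => eth211 (π 2)
  | a14 => eth14 (ρ 0)
  | b14 => eth14 (ρ 1)
  | c14 => eth14 (ρ 2)
  | e14 => eth14 (ρ 3)
  | f14 => eth14 (ρ 4)
  | h14 => eth14 (ρ 5)

lemma ethMap_eth22 (π ρ) (i : Fin 3) : ethMap π ρ (eth22 i) = eth22 (π i) := by
  fin_cases i <;> rfl

lemma ethMap_eth211 (π ρ) (i : Fin 3) : ethMap π ρ (eth211 i) = eth211 (π i) := by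
  fin_cases i <;> rfl

lemma ethMap_eth14 (π ρ) (j : Fin 6) : ethMap π ρ (eth14 j) = eth14 (ρ j) := by
  fin_cases j <;> rfl

lemma ethMap_comp (π π' ρ ρ') (x : EthP) :
    ethMap π ρ (ethMap π' ρ' x) = ethMap (π * π') (ρ * ρ') x := by
  cases x <;>
    first
      | rfl
      | exact ethMap_eth22 _ _ _
      | exact ethMap_eth211 _ _ _
      | exact ethMap_eth14 _ _ _

lemma ethMap_one : ∀ x : EthP, ethMap 1 1 x = x := by decide

lemma ethMap_inv_apply (π ρ) (x : EthP) : ethMap π⁻¹ ρ⁻¹ (ethMap π ρ x) = x := by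
  rw [ethMap_comp, inv_mul_cancel, inv_mul_cancel, ethMap_one]

lemma eth22_level : ∀ i : Fin 3, ethLevel (eth22 i) = 2 := by decide
lemma eth211_level : ∀ i : Fin 3, ethLevel (eth211 i) = 1 := by decide
lemma eth14_level : ∀ j : Fin 6, ethLevel (eth14 j) = 0 := by decide

lemma ethMap_level (π ρ) : ∀ x, ethLevel (ethMap π ρ x) = ethLevel x := by
  intro x
  cases x <;>
    first
      | rfl
      | exact eth22_level _
      | exact eth211_level _
      | exact eth14_level _

lemma R14_211 : ∀ (j : Fin 6) (i : Fin 3), ethRb (eth14 j) (eth211 i) = true := by decide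
lemma R14_22 : ∀ (j : Fin 6) (i : Fin 3), ethRb (eth14 j) (eth22 i) = true := by decide
lemma R14_31 : ∀ j : Fin 6, ethRb (eth14 j) EthP.a31 = true := by decide
lemma R14_4 : ∀ j : Fin 6, ethRb (eth14 j) EthP.a4 = true := by decide
lemma R211_22 : ∀ i : Fin 3, ethRb (eth211 i) (eth22 i) = true := by decide
lemma R211_31 : ∀ i : Fin 3, ethRb (eth211 i) EthP.a31 = true := by decide
lemma R211_4 : ∀ i : Fin 3, ethRb (eth211 i) EthP.a4 = true := by decide
lemma R22_31 : ∀ i : Fin 3, ethRb (eth22 i) EthP.a31 = true := by decide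
lemma R22_4 : ∀ i : Fin 3, ethRb (eth22 i) EthP.a4 = true := by decide
lemma R211_22_inj : ∀ k m : Fin 3, ethRb (eth211 k) (eth22 m) = true → k = m := by decide

set_option maxHeartbeats 2000000 in
lemma ethRb_map (π ρ) : ∀ x y, ethRb x y = true →
    ethRb (ethMap π ρ x) (ethMap π ρ y) = true := by
  intro x y h
  cases x <;> cases y <;>
    simp only [ethMap] <;>
    first
      | exact absurd h (by decide)
      | exact ethRb_refl _
      | exact R14_211 _ _
      | exact R14_22 _ _
      | exact R14_31 _
      | exact R14_4 _
      | exact R211_22 _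
      | exact R211_31 _
      | exact R211_4 _
      | exact R22_31 _
      | exact R22_4 _
      | exact (by decide : ethRb EthP.a31 EthP.a4 = true)

lemma ethMap_le_iff (π ρ) (x y : EthP) :
    ethLE (ethMap π ρ x) (ethMap π ρ y) ↔ ethLE x y := by
  simp only [ethLE_iff]
  constructor
  · intro h
    have h2 := ethRb_map π⁻¹ ρ⁻¹ _ _ h
    rwa [ethMap_inv_apply, ethMap_inv_apply] at h2
  · exact ethRb_map π ρ x y

/-- The permutation of `EthP` induced by `(π, ρ)`. -/
def ethEquiv (π : Equiv.Perm (Fin 3)) (ρ : Equiv.Perm (Fin 6)) : Equiv.Perm EthP where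
  toFun := ethMap π ρ
  invFun := ethMap π⁻¹ ρ⁻¹
  left_inv x := ethMap_inv_apply π ρ x
  right_inv x := by
    rw [ethMap_comp, mul_inv_cancel, mul_inv_cancel, ethMap_one]

lemma ethEquiv_mem (π ρ) : ethEquiv π ρ ∈ ethAut :=
  ⟨ethMap_level π ρ, ethMap_le_iff π ρ⟩

/-- The monoid hom `S₃ × S₆ →* ethAut`. -/
def ethHom : Equiv.Perm (Fin 3) × Equiv.Perm (Fin 6) →* ethAut where
  toFun p := ⟨ethEquiv p.1 p.2, ethEquiv_mem p.1 p.2⟩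
  map_one' := by
    apply Subtype.ext
    apply Equiv.ext
    intro x
    exact ethMap_one x
  map_mul' p q := by
    apply Subtype.ext
    apply Equiv.ext
    intro x
    exact (ethMap_comp p.1 q.1 p.2 q.2 x).symm

lemma eth22_inj : ∀ i j : Fin 3, eth22 i = eth22 j → i = j := by decide
lemma eth14_inj : ∀ i j : Fin 6, eth14 i = eth14 j → i = j := by decide

def ethIdx22 : EthP → Fin 3
  | EthP.b22 => 1
  | EthP.c22 => 2
  | _ => 0

def ethIdx211 : EthP → Fin 3
  | EthP.b211 => 1
  | EthP.c211 => 2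
  | _ => 0

def ethIdx14 : EthP → Fin 6
  | EthP.b14 => 1
  | EthP.c14 => 2
  | EthP.e14 => 3
  | EthP.f14 => 4
  | EthP.h14 => 5
  | _ => 0

lemma eth_eq22 : ∀ x : EthP, ethLevel x = 2 → eth22 (ethIdx22 x) = x := by decide
lemma eth_eq211 : ∀ x : EthP, ethLevel x = 1 → eth211 (ethIdx211 x) = x := by decide
lemma eth_eq14 : ∀ x : EthP, ethLevel x = 0 → eth14 (ethIdx14 x) = x := by decide
lemma eth_eq4 : ∀ x : EthP, ethLevel x = 4 → x = EthP.a4 := by decide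
lemma eth_eq31 : ∀ x : EthP, ethLevel x = 3 → x = EthP.a31 := by decide

lemma ethHom_injective : Function.Injective ethHom := by
  rw [injective_iff_map_eq_one]
  rintro ⟨π, ρ⟩ h
  have h' : ∀ x, ethMap π ρ x = x := fun x =>
    congrArg (fun g : ethAut => (g : Equiv.Perm EthP) x) h
  have e1 : (π, ρ).1 = (1 : Equiv.Perm (Fin 3) × Equiv.Perm (Fin 6)).1 ∧
      (π, ρ).2 = (1 : Equiv.Perm (Fin 3) × Equiv.Perm (Fin 6)).2 := ?_
  · exact Prod.ext_iff.mpr e1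
  constructor
  · apply Equiv.ext
    intro i
    apply eth22_inj
    rw [← ethMap_eth22 π ρ i, h' (eth22 i)]
    rfl
  · apply Equiv.ext
    intro j
    apply eth14_inj
    rw [← ethMap_eth14 π ρ j, h' (eth14 j)]
    rfl

lemma ethHom_surjective : Function.Surjective ethHom := by
  rintro ⟨α, hlvl, hord⟩
  have hπf : ∀ i : Fin 3, eth22 (ethIdx22 (α (eth22 i))) = α (eth22 i) := fun i =>
    eth_eq22 _ (by rw [hlvl]; exact eth22_level i)
  have hρf : ∀ j : Fin 6, eth14 (ethIdx14 (α (eth14 j))) = α (eth14 j) := fun j =>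
    eth_eq14 _ (by rw [hlvl]; exact eth14_level j)
  have hπinj : Function.Injective (fun i => ethIdx22 (α (eth22 i))) := by
    intro i j hij
    have : α (eth22 i) = α (eth22 j) := by
      rw [← hπf i, ← hπf j]; exact congrArg eth22 hij
    exact eth22_inj _ _ (α.injective this)
  have hρinj : Function.Injective (fun j => ethIdx14 (α (eth14 j))) := by
    intro i j hij
    have : α (eth14 i) = α (eth14 j) := by
      rw [← hρf i, ← hρf j]; exact congrArg eth14 hij
    exact eth14_inj _ _ (α.injective this)
  let π : Equiv.Perm (Fin 3) :=
    Equiv.ofBijective _ (Finite.injective_iff_bijective.mp hπinj)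
  let ρ : Equiv.Perm (Fin 6) :=
    Equiv.ofBijective _ (Finite.injective_iff_bijective.mp hρinj)
  have hπ : ∀ i, α (eth22 i) = eth22 (π i) := fun i => (hπf i).symm
  have hρ : ∀ j, α (eth14 j) = eth14 (ρ j) := fun j => (hρf j).symm
  have h211 : ∀ i, α (eth211 i) = eth211 (π i) := by
    intro i
    have hl : ethLevel (α (eth211 i)) = 1 := by rw [hlvl]; exact eth211_level i
    have hle : ethLE (α (eth211 i)) (α (eth22 i)) :=
      (hord _ _).mpr (le_of_ethRb _ _ (R211_22 i))
    rw [← eth_eq211 _ hl] at hle ⊢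
    rw [hπ i] at hle
    rw [R211_22_inj _ _ (ethRb_of_le hle)]
  have h4 : α EthP.a4 = EthP.a4 := eth_eq4 _ (hlvl EthP.a4)
  have h31 : α EthP.a31 = EthP.a31 := eth_eq31 _ (hlvl EthP.a31)
  refine ⟨(π, ρ), ?_⟩
  apply Subtype.ext
  apply Equiv.ext
  intro x
  show ethMap π ρ x = α x
  cases x
  · exact h4.symm
  · exact h31.symm
  · exact (hπ 0).symm
  · exact (hπ 1).symm
  · exact (hπ 2).symm
  · exact (h211 0).symm
  · exact (h211 1).symm
  · exact (h211 2).symm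
  · exact (hρ 0).symm
  · exact (hρ 1).symm
  · exact (hρ 2).symm
  · exact (hρ 3).symm
  · exact (hρ 4).symm
  · exact (hρ 5).symm

/-- The group of level-preserving order automorphisms of the
ethene poset is isomorphic to `S₃ × S₆`, where the `S₃`-factor simultaneously
permutes the chains `(a₂₂,a₂₁₁)`, `(b₂₂,b₂₁₁)`, `(c₂₂,c₂₁₁)` and the `S₆`-factor
consists of all permutations of the six bottom elements. -/
theorem lunn_senior_stmt17 :
    ∃ Φ : Equiv.Perm (Fin 3) × Equiv.Perm (Fin 6) ≃* ethAut,
      ∀ (π : Equiv.Perm (Fin 3)) (ρ : Equiv.Perm (Fin 6)),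
        ((Φ (π, ρ) : Equiv.Perm EthP) EthP.a4 = EthP.a4) ∧
        ((Φ (π, ρ) : Equiv.Perm EthP) EthP.a31 = EthP.a31) ∧
        (∀ i, (Φ (π, ρ) : Equiv.Perm EthP) (eth22 i) = eth22 (π i)) ∧
        (∀ i, (Φ (π, ρ) : Equiv.Perm EthP) (eth211 i) = eth211 (π i)) ∧
        (∀ j, (Φ (π, ρ) : Equiv.Perm EthP) (eth14 j) = eth14 (ρ j)) := by
  refine ⟨MulEquiv.ofBijective ethHom ⟨ethHom_injective, ethHom_surjective⟩, ?_⟩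
  intro π ρ
  exact ⟨rfl, rfl, ethMap_eth22 π ρ, ethMap_eth211 π ρ, ethMap_eth14 π ρ⟩
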